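/- Fix K > 0 and j ∈ {1,2,3}, and let c̃, s̃ be the ultradiscrete elliptic functions. For every v ∈ ℝ, the two identities c̃(u+v) = max(c̃(u)+s̃(u)+2c̃(v), s̃(v)) − max(s̃(u)+2s̃(v), 2c̃(u)+c̃(v)) and s̃(u+v) = max(c̃(u), 2s̃(u)+c̃(v)+s̃(v)) − max(s̃(u)+2s̃(v), 2c̃(u)+c̃(v)) hold for all u ∈ [(j−1)K, jK] if and only if (v − (j−1)K) mod 3K ∈ [0, K] ∪ [2K, 3K). -/

import Mathlib

/-- The ultradiscrete elliptic function `c̃`. -/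
noncomputable def ctilde (K u : ℝ) : ℝ :=
  -(9 * K / 2) * (Int.fract ((u - K) / (3 * K)) - 1 / 2) ^ 2
    + (9 * K / 2) * (Int.fract (u / (3 * K)) - 1 / 2) ^ 2

/-- The ultradiscrete elliptic function `s̃`. -/
noncomputable def stilde (K u : ℝ) : ℝ :=
  -(9 * K / 2) * (Int.fract ((u - 2 * K) / (3 * K)) - 1 / 2) ^ 2
    + (9 * K / 2) * (Int.fract (u / (3 * K)) - 1 / 2) ^ 2

/-- The real number `x` reduced modulo `y`, i.e. `x − y⌊x/y⌋`. -/
noncomputable def rmod (x y : ℝ) : ℝ := x - y * ⌊x / y⌋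

lemma fract_eq_of_shift {y : ℝ} (hy : 0 < y) {x z : ℝ} (h : x = z - 1)
    (h0 : 0 ≤ z) (h1 : z < 1) : Int.fract x = z := by
  have : Int.fract x = Int.fract (z - ((1:ℤ):ℝ)) := by rw [h]; norm_num
  rw [this, Int.fract_sub_intCast, Int.fract_eq_self.2 ⟨h0, h1⟩]

lemma ctilde_eval1 {K : ℝ} (hK : 0 < K) {u : ℝ} (h0 : 0 ≤ u) (h1 : u ≤ K) :
    ctilde K u = K - 2 * u := by
  have h3K : (0:ℝ) < 3 * K := by linarith
  have hne : (3:ℝ) * K ≠ 0 := ne_of_gt h3K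
  have hf1 : Int.fract (u / (3 * K)) = u / (3 * K) :=
    Int.fract_eq_self.2 ⟨div_nonneg h0 h3K.le, by rw [div_lt_one h3K]; linarith⟩
  rcases lt_or_eq_of_le h1 with hlt | heq
  · have hf2 : Int.fract ((u - K) / (3 * K)) = (u + 2 * K) / (3 * K) := by
      refine fract_eq_of_shift h3K (by field_simp; ring) (div_nonneg (by linarith) h3K.le) ?_
      rw [div_lt_one h3K]; linarith
    unfold ctilde; rw [hf1, hf2]; field_simp; ring
  · subst heq
    have hf2 : Int.fract ((u - u) / (3 * u)) = 0 := by
      rw [show (u - u) / (3 * u) = 0 by simp, Int.fract_zero]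
    unfold ctilde; rw [hf1, hf2]; field_simp; ring

lemma ctilde_eval2 {K : ℝ} (hK : 0 < K) {u : ℝ} (h0 : K ≤ u) (h1 : u ≤ 3 * K) :
    ctilde K u = u - 2 * K := by
  have h3K : (0:ℝ) < 3 * K := by linarith
  have hne : (3:ℝ) * K ≠ 0 := ne_of_gt h3K
  have hf2 : Int.fract ((u - K) / (3 * K)) = (u - K) / (3 * K) :=
    Int.fract_eq_self.2 ⟨div_nonneg (by linarith) h3K.le, by rw [div_lt_one h3K]; linarith⟩
  rcases lt_or_eq_of_le h1 with hlt | heq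
  · have hf1 : Int.fract (u / (3 * K)) = u / (3 * K) :=
      Int.fract_eq_self.2 ⟨div_nonneg (by linarith) h3K.le, by rw [div_lt_one h3K]; linarith⟩
    unfold ctilde; rw [hf1, hf2]; field_simp; ring
  · subst heq
    have hf1 : Int.fract (3 * K / (3 * K)) = 0 := by
      rw [div_self hne, show ((1:ℝ)) = ((1:ℤ):ℝ) by norm_num, Int.fract_intCast]
    unfold ctilde; rw [hf1, hf2]; field_simp; ring

lemma stilde_eval1 {K : ℝ} (hK : 0 < K) {u : ℝ} (h0 : 0 ≤ u) (h1 : u ≤ 2 * K) :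
    stilde K u = K - u := by
  have h3K : (0:ℝ) < 3 * K := by linarith
  have hne : (3:ℝ) * K ≠ 0 := ne_of_gt h3K
  have hf1 : Int.fract (u / (3 * K)) = u / (3 * K) :=
    Int.fract_eq_self.2 ⟨div_nonneg h0 h3K.le, by rw [div_lt_one h3K]; linarith⟩
  rcases lt_or_eq_of_le h1 with hlt | heq
  · have hf2 : Int.fract ((u - 2 * K) / (3 * K)) = (u + K) / (3 * K) := by
      refine fract_eq_of_shift h3K (by field_simp; ring) (div_nonneg (by linarith) h3K.le) ?_
      rw [div_lt_one h3K]; linarith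
    unfold stilde; rw [hf1, hf2]; field_simp; ring
  · subst heq
    have hf2 : Int.fract ((2 * K - 2 * K) / (3 * K)) = 0 := by
      rw [show (2 * K - 2 * K) / (3 * K) = 0 by simp, Int.fract_zero]
    unfold stilde; rw [hf1, hf2]; field_simp; ring

lemma stilde_eval2 {K : ℝ} (hK : 0 < K) {u : ℝ} (h0 : 2 * K ≤ u) (h1 : u ≤ 3 * K) :
    stilde K u = 2 * u - 5 * K := by
  have h3K : (0:ℝ) < 3 * K := by linarith
  have hne : (3:ℝ) * K ≠ 0 := ne_of_gt h3K
  have hf2 : Int.fract ((u - 2 * K) / (3 * K)) = (u - 2 * K) / (3 * K) :=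
    Int.fract_eq_self.2 ⟨div_nonneg (by linarith) h3K.le, by rw [div_lt_one h3K]; linarith⟩
  rcases lt_or_eq_of_le h1 with hlt | heq
  · have hf1 : Int.fract (u / (3 * K)) = u / (3 * K) :=
      Int.fract_eq_self.2 ⟨div_nonneg (by linarith) h3K.le, by rw [div_lt_one h3K]; linarith⟩
    unfold stilde; rw [hf1, hf2]; field_simp; ring
  · subst heq
    have hf1 : Int.fract (3 * K / (3 * K)) = 0 := by
      rw [div_self hne, show ((1:ℝ)) = ((1:ℤ):ℝ) by norm_num, Int.fract_intCast]
    unfold stilde; rw [hf1, hf2]; field_simp; ring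

lemma ctilde_add_int {K : ℝ} (hK : 0 < K) (x : ℝ) (n : ℤ) :
    ctilde K (x + 3 * K * n) = ctilde K x := by
  have hne : (3:ℝ) * K ≠ 0 := by positivity
  unfold ctilde
  rw [show (x + 3 * K * n - K) / (3 * K) = (x - K) / (3 * K) + n by field_simp; ring,
      show (x + 3 * K * n) / (3 * K) = x / (3 * K) + n by field_simp,
      Int.fract_add_intCast, Int.fract_add_intCast]

lemma stilde_add_int {K : ℝ} (hK : 0 < K) (x : ℝ) (n : ℤ) :
    stilde K (x + 3 * K * n) = stilde K x := by
  have hne : (3:ℝ) * K ≠ 0 := by positivity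
  unfold stilde
  rw [show (x + 3 * K * n - 2 * K) / (3 * K) = (x - 2 * K) / (3 * K) + n by field_simp; ring,
      show (x + 3 * K * n) / (3 * K) = x / (3 * K) + n by field_simp,
      Int.fract_add_intCast, Int.fract_add_intCast]

lemma ctilde_shift {K : ℝ} (hK : 0 < K) {x y : ℝ} (n : ℤ) (h : x = y + 3 * K * n) :
    ctilde K x = ctilde K y := by rw [h, ctilde_add_int hK]

lemma stilde_shift {K : ℝ} (hK : 0 < K) {x y : ℝ} (n : ℤ) (h : x = y + 3 * K * n) :
    stilde K x = stilde K y := by rw [h, stilde_add_int hK]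

def Iden (K u v : ℝ) : Prop :=
  ctilde K (u + v) =
      max (ctilde K u + stilde K u + 2 * ctilde K v) (stilde K v)
        - max (stilde K u + 2 * stilde K v) (2 * ctilde K u + ctilde K v) ∧
  stilde K (u + v) =
      max (ctilde K u) (2 * stilde K u + ctilde K v + stilde K v)
        - max (stilde K u + 2 * stilde K v) (2 * ctilde K u + ctilde K v)

lemma key1 {K : ℝ} (hK : 0 < K) {w : ℝ} (hw0 : 0 ≤ w) (hw3 : w < 3 * K) :
    (∀ u ∈ Set.Icc (0:ℝ) K, Iden K u w) ↔ (w ≤ K ∨ 2 * K ≤ w) := by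
  constructor
  · intro H
    by_contra hcon
    push_neg at hcon
    obtain ⟨hw1, hw2⟩ := hcon
    obtain ⟨h1, h2⟩ := H (K / 2) ⟨by linarith, by linarith⟩
    have hcu : ctilde K (K / 2) = K - 2 * (K / 2) := ctilde_eval1 hK (by linarith) (by linarith)
    have hsu : stilde K (K / 2) = K - K / 2 := stilde_eval1 hK (by linarith) (by linarith)
    have hcv : ctilde K w = w - 2 * K := ctilde_eval2 hK (by linarith) (by linarith)
    have hsv : stilde K w = K - w := stilde_eval1 hK (by linarith) (by linarith)
    rcases le_total (K / 2 + w) (2 * K) with hc | hc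
    · have hss : stilde K (K / 2 + w) = K - (K / 2 + w) :=
        stilde_eval1 hK (by linarith) (by linarith)
      rw [hcu, hsu, hcv, hsv, hss] at h2
      simp only [max_def] at h2
      split_ifs at h2 <;> linarith
    · have hss : stilde K (K / 2 + w) = 2 * (K / 2 + w) - 5 * K :=
        stilde_eval2 hK (by linarith) (by linarith)
      rw [hcu, hsu, hcv, hsv, hss] at h2
      simp only [max_def] at h2
      split_ifs at h2 <;> linarith
  · rintro hw u ⟨hu0, hu1⟩
    have hcu : ctilde K u = K - 2 * u := ctilde_eval1 hK hu0 hu1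
    have hsu : stilde K u = K - u := stilde_eval1 hK hu0 (by linarith)
    rcases hw with hw | hw
    · have hcv : ctilde K w = K - 2 * w := ctilde_eval1 hK hw0 hw
      have hsv : stilde K w = K - w := stilde_eval1 hK hw0 (by linarith)
      rcases le_total (u + w) K with hc | hc
      · have hcs : ctilde K (u + w) = K - 2 * (u + w) := ctilde_eval1 hK (by linarith) hc
        have hss : stilde K (u + w) = K - (u + w) := stilde_eval1 hK (by linarith) (by linarith)
        refine ⟨?_, ?_⟩ <;> simp only [hcu, hsu, hcv, hsv, hcs, hss, max_def] <;> split_ifs <;> linarith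
      · have hcs : ctilde K (u + w) = (u + w) - 2 * K := ctilde_eval2 hK hc (by linarith)
        have hss : stilde K (u + w) = K - (u + w) := stilde_eval1 hK (by linarith) (by linarith)
        refine ⟨?_, ?_⟩ <;> simp only [hcu, hsu, hcv, hsv, hcs, hss, max_def] <;> split_ifs <;> linarith
    · have hcv : ctilde K w = w - 2 * K := ctilde_eval2 hK (by linarith) (by linarith)
      have hsv : stilde K w = 2 * w - 5 * K := stilde_eval2 hK hw (by linarith)
      rcases le_total (u + w) (3 * K) with hc | hc
      · have hcs : ctilde K (u + w) = (u + w) - 2 * K := ctilde_eval2 hK (by linarith) hc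
        have hss : stilde K (u + w) = 2 * (u + w) - 5 * K := stilde_eval2 hK (by linarith) hc
        refine ⟨?_, ?_⟩ <;> simp only [hcu, hsu, hcv, hsv, hcs, hss, max_def] <;> split_ifs <;> linarith
      · have hcs : ctilde K (u + w) = K - 2 * (u + w - 3 * K) := by
          rw [ctilde_shift hK 1 (by push_cast; ring : u + w = (u + w - 3 * K) + 3 * K * (1:ℤ))]
          exact ctilde_eval1 hK (by linarith) (by linarith)
        have hss : stilde K (u + w) = K - (u + w - 3 * K) := by
          rw [stilde_shift hK 1 (by push_cast; ring : u + w = (u + w - 3 * K) + 3 * K * (1:ℤ))]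
          exact stilde_eval1 hK (by linarith) (by linarith)
        refine ⟨?_, ?_⟩ <;> simp only [hcu, hsu, hcv, hsv, hcs, hss, max_def] <;> split_ifs <;> linarith

lemma key2 {K : ℝ} (hK : 0 < K) {w : ℝ} (hw0 : 0 ≤ w) (hw3 : w < 3 * K) :
    (∀ u ∈ Set.Icc K (2 * K), Iden K u (K + w)) ↔ (w ≤ K ∨ 2 * K ≤ w) := by
  constructor
  · intro H
    by_contra hcon
    push_neg at hcon
    obtain ⟨hw1, hw2⟩ := hcon
    obtain ⟨h1, h2⟩ := H (3 * K / 2) ⟨by linarith, by linarith⟩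
    have hcu : ctilde K (3 * K / 2) = 3 * K / 2 - 2 * K :=
      ctilde_eval2 hK (by linarith) (by linarith)
    have hsu : stilde K (3 * K / 2) = K - 3 * K / 2 :=
      stilde_eval1 hK (by linarith) (by linarith)
    have hcv : ctilde K (K + w) = (K + w) - 2 * K := ctilde_eval2 hK (by linarith) (by linarith)
    have hsv : stilde K (K + w) = 2 * (K + w) - 5 * K := stilde_eval2 hK (by linarith) (by linarith)
    rcases le_total w (3 * K / 2) with hc | hc
    · have hcs : ctilde K (3 * K / 2 + (K + w)) = K - 2 * (3 * K / 2 + (K + w) - 3 * K) := by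
        rw [ctilde_shift hK 1
          (by push_cast; ring : 3 * K / 2 + (K + w) = (3 * K / 2 + (K + w) - 3 * K) + 3 * K * (1:ℤ))]
        exact ctilde_eval1 hK (by linarith) (by linarith)
      rw [hcu, hsu, hcv, hsv, hcs] at h1
      simp only [max_def] at h1
      split_ifs at h1 <;> linarith
    · have hcs : ctilde K (3 * K / 2 + (K + w)) = (3 * K / 2 + (K + w) - 3 * K) - 2 * K := by
        rw [ctilde_shift hK 1
          (by push_cast; ring : 3 * K / 2 + (K + w) = (3 * K / 2 + (K + w) - 3 * K) + 3 * K * (1:ℤ))]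
        exact ctilde_eval2 hK (by linarith) (by linarith)
      rw [hcu, hsu, hcv, hsv, hcs] at h1
      simp only [max_def] at h1
      split_ifs at h1 <;> linarith
  · rintro hw u ⟨hu0, hu1⟩
    have hcu : ctilde K u = u - 2 * K := ctilde_eval2 hK hu0 (by linarith)
    have hsu : stilde K u = K - u := stilde_eval1 hK (by linarith) hu1
    have e1 : (u + (K + w)) = (u + (K + w) - 3 * K) + 3 * K * ((1:ℤ):ℝ) := by push_cast; ring
    rcases hw with hw | hw
    · have hcv : ctilde K (K + w) = (K + w) - 2 * K := ctilde_eval2 hK (by linarith) (by linarith)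
      have hsv : stilde K (K + w) = K - (K + w) := stilde_eval1 hK (by linarith) (by linarith)
      rcases le_total (u + (K + w)) (3 * K) with hc | hc
      · have hcs : ctilde K (u + (K + w)) = (u + (K + w)) - 2 * K :=
          ctilde_eval2 hK (by linarith) hc
        have hss : stilde K (u + (K + w)) = 2 * (u + (K + w)) - 5 * K :=
          stilde_eval2 hK (by linarith) hc
        refine ⟨?_, ?_⟩ <;> simp only [hcu, hsu, hcv, hsv, hcs, hss, max_def] <;>
          split_ifs <;> linarith
      · have hcs : ctilde K (u + (K + w)) = K - 2 * (u + (K + w) - 3 * K) := by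
          rw [ctilde_shift hK 1 e1]; exact ctilde_eval1 hK (by linarith) (by linarith)
        have hss : stilde K (u + (K + w)) = K - (u + (K + w) - 3 * K) := by
          rw [stilde_shift hK 1 e1]; exact stilde_eval1 hK (by linarith) (by linarith)
        refine ⟨?_, ?_⟩ <;> simp only [hcu, hsu, hcv, hsv, hcs, hss, max_def] <;>
          split_ifs <;> linarith
    · have hcv : ctilde K (K + w) = K - 2 * (K + w - 3 * K) := by
        rw [ctilde_shift hK 1 (by push_cast; ring : K + w = (K + w - 3 * K) + 3 * K * (1:ℤ))]
        exact ctilde_eval1 hK (by linarith) (by linarith)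
      have hsv : stilde K (K + w) = K - (K + w - 3 * K) := by
        rw [stilde_shift hK 1 (by push_cast; ring : K + w = (K + w - 3 * K) + 3 * K * (1:ℤ))]
        exact stilde_eval1 hK (by linarith) (by linarith)
      rcases le_total (u + w) (4 * K) with hc | hc
      · have hcs : ctilde K (u + (K + w)) = (u + (K + w) - 3 * K) - 2 * K := by
          rw [ctilde_shift hK 1 e1]; exact ctilde_eval2 hK (by linarith) (by linarith)
        have hss : stilde K (u + (K + w)) = K - (u + (K + w) - 3 * K) := by
          rw [stilde_shift hK 1 e1]; exact stilde_eval1 hK (by linarith) (by linarith)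
        refine ⟨?_, ?_⟩ <;> simp only [hcu, hsu, hcv, hsv, hcs, hss, max_def] <;>
          split_ifs <;> linarith
      · have hcs : ctilde K (u + (K + w)) = (u + (K + w) - 3 * K) - 2 * K := by
          rw [ctilde_shift hK 1 e1]; exact ctilde_eval2 hK (by linarith) (by linarith)
        have hss : stilde K (u + (K + w)) = 2 * (u + (K + w) - 3 * K) - 5 * K := by
          rw [stilde_shift hK 1 e1]; exact stilde_eval2 hK (by linarith) (by linarith)
        refine ⟨?_, ?_⟩ <;> simp only [hcu, hsu, hcv, hsv, hcs, hss, max_def] <;>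
          split_ifs <;> linarith

lemma key3 {K : ℝ} (hK : 0 < K) {w : ℝ} (hw0 : 0 ≤ w) (hw3 : w < 3 * K) :
    (∀ u ∈ Set.Icc (2 * K) (3 * K), Iden K u (2 * K + w)) ↔ (w ≤ K ∨ 2 * K ≤ w) := by
  constructor
  · intro H
    by_contra hcon
    push_neg at hcon
    obtain ⟨hw1, hw2⟩ := hcon
    obtain ⟨h1, h2⟩ := H (5 * K / 2) ⟨by linarith, by linarith⟩
    have hcu : ctilde K (5 * K / 2) = 5 * K / 2 - 2 * K :=
      ctilde_eval2 hK (by linarith) (by linarith)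
    have hsu : stilde K (5 * K / 2) = 2 * (5 * K / 2) - 5 * K :=
      stilde_eval2 hK (by linarith) (by linarith)
    have hcv : ctilde K (2 * K + w) = K - 2 * (2 * K + w - 3 * K) := by
      rw [ctilde_shift hK 1 (by push_cast; ring : 2 * K + w = (2 * K + w - 3 * K) + 3 * K * (1:ℤ))]
      exact ctilde_eval1 hK (by linarith) (by linarith)
    have hsv : stilde K (2 * K + w) = K - (2 * K + w - 3 * K) := by
      rw [stilde_shift hK 1 (by push_cast; ring : 2 * K + w = (2 * K + w - 3 * K) + 3 * K * (1:ℤ))]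
      exact stilde_eval1 hK (by linarith) (by linarith)
    rcases le_total w (3 * K / 2) with hc | hc
    · have hcs : ctilde K (5 * K / 2 + (2 * K + w)) = (5 * K / 2 + (2 * K + w) - 3 * K) - 2 * K := by
        rw [ctilde_shift hK 1 (by push_cast; ring :
          5 * K / 2 + (2 * K + w) = (5 * K / 2 + (2 * K + w) - 3 * K) + 3 * K * (1:ℤ))]
        exact ctilde_eval2 hK (by linarith) (by linarith)
      rw [hcu, hsu, hcv, hsv, hcs] at h1
      simp only [max_def] at h1
      split_ifs at h1 <;> linarith
    · have hcs : ctilde K (5 * K / 2 + (2 * K + w)) = K - 2 * (5 * K / 2 + (2 * K + w) - 6 * K) := by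
        rw [ctilde_shift hK 2 (by push_cast; ring :
          5 * K / 2 + (2 * K + w) = (5 * K / 2 + (2 * K + w) - 6 * K) + 3 * K * (2:ℤ))]
        exact ctilde_eval1 hK (by linarith) (by linarith)
      rw [hcu, hsu, hcv, hsv, hcs] at h1
      simp only [max_def] at h1
      split_ifs at h1 <;> linarith
  · rintro hw u ⟨hu0, hu1⟩
    have hcu : ctilde K u = u - 2 * K := ctilde_eval2 hK (by linarith) hu1
    have hsu : stilde K u = 2 * u - 5 * K := stilde_eval2 hK hu0 hu1
    have e1 : (u + (2 * K + w)) = (u + (2 * K + w) - 3 * K) + 3 * K * ((1:ℤ):ℝ) := by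
      push_cast; ring
    have e2 : (u + (2 * K + w)) = (u + (2 * K + w) - 6 * K) + 3 * K * ((2:ℤ):ℝ) := by
      push_cast; ring
    rcases hw with hw | hw
    · have hcv : ctilde K (2 * K + w) = (2 * K + w) - 2 * K :=
        ctilde_eval2 hK (by linarith) (by linarith)
      have hsv : stilde K (2 * K + w) = 2 * (2 * K + w) - 5 * K :=
        stilde_eval2 hK (by linarith) (by linarith)
      rcases le_total (u + w) (3 * K) with hc | hc
      · have hcs : ctilde K (u + (2 * K + w)) = (u + (2 * K + w) - 3 * K) - 2 * K := by
          rw [ctilde_shift hK 1 e1]; exact ctilde_eval2 hK (by linarith) (by linarith)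
        have hss : stilde K (u + (2 * K + w)) = K - (u + (2 * K + w) - 3 * K) := by
          rw [stilde_shift hK 1 e1]; exact stilde_eval1 hK (by linarith) (by linarith)
        refine ⟨?_, ?_⟩ <;> simp only [hcu, hsu, hcv, hsv, hcs, hss, max_def] <;>
          split_ifs <;> linarith
      · have hcs : ctilde K (u + (2 * K + w)) = (u + (2 * K + w) - 3 * K) - 2 * K := by
          rw [ctilde_shift hK 1 e1]; exact ctilde_eval2 hK (by linarith) (by linarith)
        have hss : stilde K (u + (2 * K + w)) = 2 * (u + (2 * K + w) - 3 * K) - 5 * K := by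
          rw [stilde_shift hK 1 e1]; exact stilde_eval2 hK (by linarith) (by linarith)
        refine ⟨?_, ?_⟩ <;> simp only [hcu, hsu, hcv, hsv, hcs, hss, max_def] <;>
          split_ifs <;> linarith
    · have hcv : ctilde K (2 * K + w) = (2 * K + w - 3 * K) - 2 * K := by
        rw [ctilde_shift hK 1 (by push_cast; ring : 2 * K + w = (2 * K + w - 3 * K) + 3 * K * (1:ℤ))]
        exact ctilde_eval2 hK (by linarith) (by linarith)
      have hsv : stilde K (2 * K + w) = K - (2 * K + w - 3 * K) := by
        rw [stilde_shift hK 1 (by push_cast; ring : 2 * K + w = (2 * K + w - 3 * K) + 3 * K * (1:ℤ))]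
        exact stilde_eval1 hK (by linarith) (by linarith)
      rcases le_total (u + w) (5 * K) with hc | hc
      · have hcs : ctilde K (u + (2 * K + w)) = K - 2 * (u + (2 * K + w) - 6 * K) := by
          rw [ctilde_shift hK 2 e2]; exact ctilde_eval1 hK (by linarith) (by linarith)
        have hss : stilde K (u + (2 * K + w)) = K - (u + (2 * K + w) - 6 * K) := by
          rw [stilde_shift hK 2 e2]; exact stilde_eval1 hK (by linarith) (by linarith)
        refine ⟨?_, ?_⟩ <;> simp only [hcu, hsu, hcv, hsv, hcs, hss, max_def] <;>
          split_ifs <;> linarith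
      · have hcs : ctilde K (u + (2 * K + w)) = (u + (2 * K + w) - 6 * K) - 2 * K := by
          rw [ctilde_shift hK 2 e2]; exact ctilde_eval2 hK (by linarith) (by linarith)
        have hss : stilde K (u + (2 * K + w)) = K - (u + (2 * K + w) - 6 * K) := by
          rw [stilde_shift hK 2 e2]; exact stilde_eval1 hK (by linarith) (by linarith)
        refine ⟨?_, ?_⟩ <;> simp only [hcu, hsu, hcv, hsv, hcs, hss, max_def] <;>
          split_ifs <;> linarith

/-- Second pair of ultradiscrete addition formulae: valid on `[(j−1)K, jK]`
exactly when `v` lies in the closure of `D_j ∪ D_{j+2}` modulo `3K`. -/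
theorem ultradiscrete_addition_second_pair (K : ℝ) (hK : 0 < K)
    (j : ℕ) (hj : j = 1 ∨ j = 2 ∨ j = 3) (v : ℝ) :
    (∀ u ∈ Set.Icc (((j : ℝ) - 1) * K) ((j : ℝ) * K),
      ctilde K (u + v) =
        max (ctilde K u + stilde K u + 2 * ctilde K v) (stilde K v)
          - max (stilde K u + 2 * stilde K v) (2 * ctilde K u + ctilde K v) ∧
      stilde K (u + v) =
        max (ctilde K u) (2 * stilde K u + ctilde K v + stilde K v)
          - max (stilde K u + 2 * stilde K v) (2 * ctilde K u + ctilde K v))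
    ↔ rmod (v - ((j : ℝ) - 1) * K) (3 * K) ∈
        Set.Icc 0 K ∪ Set.Ico (2 * K) (3 * K) := by
  have h3K : (0:ℝ) < 3 * K := by linarith
  set x := v - ((j : ℝ) - 1) * K with hx
  set n : ℤ := ⌊x / (3 * K)⌋ with hn
  set w := rmod x (3 * K) with hwdef
  have hwe : w = x - 3 * K * n := rfl
  have hw0 : 0 ≤ w := by
    have h := Int.sub_floor_div_mul_nonneg x h3K
    have : w = x - (↑n) * (3 * K) := by rw [hwe]; ring
    linarith
  have hw3 : w < 3 * K := by
    have h := Int.sub_floor_div_mul_lt x h3K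
    have : w = x - (↑n) * (3 * K) := by rw [hwe]; ring
    linarith
  have hv : v = (((j : ℝ) - 1) * K + w) + 3 * K * n := by
    rw [hwe, hx]; ring
  have htrans : ∀ u : ℝ,
      (ctilde K (u + v) =
        max (ctilde K u + stilde K u + 2 * ctilde K v) (stilde K v)
          - max (stilde K u + 2 * stilde K v) (2 * ctilde K u + ctilde K v) ∧
      stilde K (u + v) =
        max (ctilde K u) (2 * stilde K u + ctilde K v + stilde K v)
          - max (stilde K u + 2 * stilde K v) (2 * ctilde K u + ctilde K v))
      ↔ Iden K u (((j : ℝ) - 1) * K + w) := by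
    intro u
    unfold Iden
    rw [show u + v = (u + ((((j : ℝ) - 1) * K) + w)) + 3 * K * n by rw [hv]; ring, hv]
    simp only [ctilde_add_int hK, stilde_add_int hK]
  simp only [htrans]
  have hmem : w ∈ Set.Icc 0 K ∪ Set.Ico (2 * K) (3 * K) ↔ (w ≤ K ∨ 2 * K ≤ w) := by
    simp only [Set.mem_union, Set.mem_Icc, Set.mem_Ico]
    constructor
    · rintro (⟨_, h⟩ | ⟨h, _⟩)
      exacts [Or.inl h, Or.inr h]
    · rintro (h | h)
      exacts [Or.inl ⟨hw0, h⟩, Or.inr ⟨h, hw3⟩]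
  rw [hmem]
  rcases hj with rfl | rfl | rfl
  · rw [show (((1:ℕ) : ℝ) - 1) * K = 0 by norm_num, show ((1:ℕ) : ℝ) * K = K by norm_num]
    simp only [zero_add]
    exact key1 hK hw0 hw3
  · rw [show (((2:ℕ) : ℝ) - 1) * K = K by norm_num, show ((2:ℕ) : ℝ) * K = 2 * K by norm_num]
    exact key2 hK hw0 hw3
  · rw [show (((3:ℕ) : ℝ) - 1) * K = 2 * K by norm_num, show ((3:ℕ) : ℝ) * K = 3 * K by norm_num]
    exact key3 hK hw0 hw3
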